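/- Let g, h₀ > 0, ω ≠ 0, and for h > 0 set S(h) = √(g h + ω²h²/4) and R±(h,u) = u − ωh/2 ± (S(h) + (g/ω)·log(2g + ω²h + 2ω S(h))). Then for every h > 0 and u ∈ ℝ, the gradient (∂R±/∂h, ∂R±/∂u) = (−ω/2 ± S(h)/h, 1) is a left eigenvector of the matrix A(h,u) = [[u + ωh₀ − ωh, h], [g, u + ωh₀]] with eigenvalue λ± = u + ωh₀ − ωh/2 ± S(h); that is, (∂R±/∂h)·(u + ωh₀ − ωh) + (∂R±/∂u)·g = λ±·(∂R±/∂h) and (∂R±/∂h)·h + (∂R±/∂u)·(u + ωh₀) = λ±·(∂R±/∂u). Hence R± are the Riemann invariants of the vorticity-modified shallow water equations. -/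

import Mathlib

open Real

/-- The gradients of `R± = u - ωh/2 ± (S(h) + (g/ω)log(2g + ω²h + 2ωS(h)))`,
`S(h) = √(gh + ω²h²/4)`, equal `(-ω/2 ± S(h)/h, 1)` and are left eigenvectors of the
coefficient matrix `A(h,u) = [[u + ωh₀ - ωh, h], [g, u + ωh₀]]` of the vorticity-modified
shallow water equations with eigenvalues `λ± = u + ωh₀ - ωh/2 ± S(h)`; hence `R±` are
its Riemann invariants. -/
theorem shallow_water_riemann_invariants
    (g h₀ ω : ℝ) (hg : 0 < g) (hω : ω ≠ 0)
    (S : ℝ → ℝ) (hS : ∀ h : ℝ, S h = Real.sqrt (g * h + ω ^ 2 * h ^ 2 / 4))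
    (Rp Rm : ℝ → ℝ → ℝ)
    (hRp : ∀ h u : ℝ, Rp h u
      = u - ω * h / 2 + (S h + g / ω * Real.log (2 * g + ω ^ 2 * h + 2 * ω * S h)))
    (hRm : ∀ h u : ℝ, Rm h u
      = u - ω * h / 2 - (S h + g / ω * Real.log (2 * g + ω ^ 2 * h + 2 * ω * S h))) :
    ∀ h > (0 : ℝ), ∀ u : ℝ,
      (deriv (fun h' => Rp h' u) h = -ω / 2 + S h / h ∧
        deriv (fun u' => Rp h u') u = 1 ∧
        (-ω / 2 + S h / h) * (u + ω * h₀ - ω * h) + 1 * g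
          = (u + ω * h₀ - ω * h / 2 + S h) * (-ω / 2 + S h / h) ∧
        (-ω / 2 + S h / h) * h + 1 * (u + ω * h₀)
          = (u + ω * h₀ - ω * h / 2 + S h) * 1) ∧
      (deriv (fun h' => Rm h' u) h = -ω / 2 - S h / h ∧
        deriv (fun u' => Rm h u') u = 1 ∧
        (-ω / 2 - S h / h) * (u + ω * h₀ - ω * h) + 1 * g
          = (u + ω * h₀ - ω * h / 2 - S h) * (-ω / 2 - S h / h) ∧
        (-ω / 2 - S h / h) * h + 1 * (u + ω * h₀)
          = (u + ω * h₀ - ω * h / 2 - S h) * 1) := by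
  intro h hh u
  have hh' : h ≠ 0 := ne_of_gt hh
  have hP : 0 < g * h + ω ^ 2 * h ^ 2 / 4 := by
    have : 0 < ω ^ 2 := by positivity
    nlinarith
  have hSdef := hS h
  have hSpos : 0 < S h := by rw [hSdef]; exact Real.sqrt_pos.2 hP
  have hS2 : S h ^ 2 = g * h + ω ^ 2 * h ^ 2 / 4 := by
    rw [hSdef]; exact Real.sq_sqrt hP.le
  have hω2 : 0 < ω ^ 2 := by positivity
  have key4 : (2 * g + ω ^ 2 * h + 2 * ω * S h) * (2 * g + ω ^ 2 * h - 2 * ω * S h)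
      = 4 * g ^ 2 := by linear_combination (-4 * ω ^ 2) * hS2
  have hE : 0 < 2 * g + ω ^ 2 * h + 2 * ω * S h := by
    by_contra hc
    push_neg at hc
    have h3 : 0 < 2 * g + ω ^ 2 * h - 2 * ω * S h := by
      have := mul_pos hω2 hh
      linarith
    nlinarith [key4, mul_nonpos_of_nonpos_of_nonneg hc h3.le, sq_nonneg g]
  -- derivative of inner polynomial
  have dP : HasDerivAt (fun h' : ℝ => g * h' + ω ^ 2 * h' ^ 2 / 4)
      (g + ω ^ 2 * (2 * h) / 4) h := by
    have h1 : HasDerivAt (fun h' : ℝ => g * h') g h := by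
      simpa using (hasDerivAt_id h).const_mul g
    have h2 : HasDerivAt (fun h' : ℝ => ω ^ 2 * h' ^ 2 / 4) (ω ^ 2 * (2 * h) / 4) h := by
      have := ((hasDerivAt_pow 2 h).const_mul (ω ^ 2)).div_const 4
      refine this.congr_deriv ?_
      norm_num
    exact h1.add h2
  set d1 : ℝ := (g + ω ^ 2 * (2 * h) / 4) / (2 * S h) with hd1
  have dS : HasDerivAt (fun h' : ℝ => Real.sqrt (g * h' + ω ^ 2 * h' ^ 2 / 4)) d1 h := by
    have := dP.sqrt (ne_of_gt hP)
    rw [hd1, hSdef]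
    exact this
  have dE : HasDerivAt
      (fun h' : ℝ => 2 * g + ω ^ 2 * h' + 2 * ω * Real.sqrt (g * h' + ω ^ 2 * h' ^ 2 / 4))
      (ω ^ 2 + 2 * ω * d1) h := by
    have h1 : HasDerivAt (fun h' : ℝ => 2 * g + ω ^ 2 * h') (ω ^ 2) h := by
      simpa using ((hasDerivAt_id h).const_mul (ω ^ 2)).const_add (2 * g)
    exact h1.add (dS.const_mul (2 * ω))
  have hEne : (2 * g + ω ^ 2 * h + 2 * ω * Real.sqrt (g * h + ω ^ 2 * h ^ 2 / 4)) ≠ 0 := by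
    rw [← hSdef]; exact ne_of_gt hE
  have dlog : HasDerivAt
      (fun h' : ℝ => Real.log (2 * g + ω ^ 2 * h' + 2 * ω * Real.sqrt (g * h' + ω ^ 2 * h' ^ 2 / 4)))
      ((ω ^ 2 + 2 * ω * d1) / (2 * g + ω ^ 2 * h + 2 * ω * S h)) h := by
    have := dE.log hEne
    rw [← hSdef] at this
    exact this
  set d2 : ℝ := (ω ^ 2 + 2 * ω * d1) / (2 * g + ω ^ 2 * h + 2 * ω * S h) with hd2
  have dlin : HasDerivAt (fun h' : ℝ => u - ω * h' / 2) (-ω / 2) h := by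
    have := (((hasDerivAt_id h).const_mul ω).div_const 2).const_sub u
    refine this.congr_deriv ?_
    ring
  have dG : HasDerivAt (fun h' : ℝ =>
      u - ω * h' / 2 + (Real.sqrt (g * h' + ω ^ 2 * h' ^ 2 / 4)
        + g / ω * Real.log (2 * g + ω ^ 2 * h' + 2 * ω * Real.sqrt (g * h' + ω ^ 2 * h' ^ 2 / 4))))
      (-ω / 2 + (d1 + g / ω * d2)) h :=
    dlin.add (dS.add (dlog.const_mul (g / ω)))
  have hSne : S h ≠ 0 := ne_of_gt hSpos
  have hEne' : 2 * g + ω ^ 2 * h + 2 * ω * S h ≠ 0 := ne_of_gt hE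
  have e1 : d2 = ω / (2 * S h) := by
    rw [hd2, hd1, div_eq_div_iff hEne' (mul_ne_zero two_ne_zero hSne)]
    field_simp
    ring
  have key : d1 + g / ω * d2 = S h / h := by
    rw [e1, hd1]
    field_simp
    linear_combination (-8) * hS2
  constructor
  · refine ⟨?_, ?_, ?_, ?_⟩
    · have : (fun h' => Rp h' u) = fun h' : ℝ =>
        u - ω * h' / 2 + (Real.sqrt (g * h' + ω ^ 2 * h' ^ 2 / 4)
          + g / ω * Real.log (2 * g + ω ^ 2 * h' + 2 * ω * Real.sqrt (g * h' + ω ^ 2 * h' ^ 2 / 4))) := by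
        funext h'; rw [hRp, hS]
      rw [this, dG.deriv, key]
    · have : (fun u' => Rp h u') = fun u' : ℝ =>
        u' - ω * h / 2 + (S h + g / ω * Real.log (2 * g + ω ^ 2 * h + 2 * ω * S h)) := by
        funext u'; rw [hRp]
      rw [this]
      exact (((hasDerivAt_id u).sub_const _).add_const _).deriv
    · field_simp
      nlinarith [hS2]
    · field_simp
      ring
  · refine ⟨?_, ?_, ?_, ?_⟩
    · have : (fun h' => Rm h' u) = fun h' : ℝ =>
        u - ω * h' / 2 - (Real.sqrt (g * h' + ω ^ 2 * h' ^ 2 / 4)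
          + g / ω * Real.log (2 * g + ω ^ 2 * h' + 2 * ω * Real.sqrt (g * h' + ω ^ 2 * h' ^ 2 / 4))) := by
        funext h'; rw [hRm, hS]
      have dG' : HasDerivAt (fun h' : ℝ =>
          u - ω * h' / 2 - (Real.sqrt (g * h' + ω ^ 2 * h' ^ 2 / 4)
            + g / ω * Real.log (2 * g + ω ^ 2 * h' + 2 * ω * Real.sqrt (g * h' + ω ^ 2 * h' ^ 2 / 4))))
          (-ω / 2 - (d1 + g / ω * d2)) h :=
        dlin.sub (dS.add (dlog.const_mul (g / ω)))
      rw [this, dG'.deriv, key]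
    · have : (fun u' => Rm h u') = fun u' : ℝ =>
        u' - ω * h / 2 - (S h + g / ω * Real.log (2 * g + ω ^ 2 * h + 2 * ω * S h)) := by
        funext u'; rw [hRm]
      rw [this]
      exact (((hasDerivAt_id u).sub_const _).sub_const _).deriv
    · field_simp
      nlinarith [hS2]
    · field_simp
      ring
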